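/- Let u ⊆ {1,…,s} be nonempty, k ∈ {0,1,…,m−1}^{|u|}, and let i, i′ ∈ {0,…,2^m−1}. If C_{u,k}·(i⃗ ⊕ i⃗′) ≠ 0 then ∏_{j∈u} N_{i,i′,j} = 0; and if C_{u,k}·(i⃗ ⊕ i⃗′) = 0 then ∏_{j∈u} N_{i,i′,j} = (−1)^{w}, where w is the number of nonzero entries of ∇C_{u,k}·(i⃗ ⊕ i⃗′) ∈ F₂^{|u|} and ⊕ denotes componentwise addition in F₂^m. -/

import Mathlib

open Finset

noncomputable section

/-- The bit vector `i⃗ ∈ F₂^m` of the integer `i = Σ_{ℓ=1}^m i_ℓ 2^{ℓ-1}`. -/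
def bvec (m : ℕ) (i : ℕ) : Fin m → ZMod 2 :=
  fun ℓ => if Nat.testBit i ℓ.1 then 1 else 0

/-- The `(r+1)`-st row (i.e. `r` with 0-indexing) of an `m × m` matrix over `F₂`,
as a vector in `F₂^m`; junk value `0` if `r ≥ m` (never used under the hypotheses below). -/
def rowAt (m : ℕ) (A : Matrix (Fin m) (Fin m) (ZMod 2)) (r : ℕ) : Fin m → ZMod 2 :=
  fun ℓ => if h : r < m then A ⟨r, h⟩ ℓ else 0

/-- The stacked matrix `C_{u,k}`: for each `j ∈ u`, the first `k j` rows of `C j`. -/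
def stack {m s : ℕ} (C : Fin s → Matrix (Fin m) (Fin m) (ZMod 2))
    (u : Finset (Fin s)) (k : Fin s → ℕ) :
    Matrix ((j : {x // x ∈ u}) × Fin (k j.1)) (Fin m) (ZMod 2) :=
  fun p => rowAt m (C p.1.1) p.2.1

/-- `∇C_{u,k}`: the matrix whose rows are the `(k j + 1)`-st rows (1-indexed) of `C j`, `j ∈ u`. -/
def grad {m s : ℕ} (C : Fin s → Matrix (Fin m) (Fin m) (ZMod 2))
    (u : Finset (Fin s)) (k : Fin s → ℕ) :
    Matrix {x // x ∈ u} (Fin m) (ZMod 2) :=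
  fun j => rowAt m (C j.1) (k j.1)

/-- The coordinate `x_{ij} ∈ [0,1)` of the digital net generated by `C₁,…,C_s`:
`x_{ij} = Σ_{ℓ=1}^m y_ℓ 2^{-ℓ}` where `y = C_j · i⃗` over `F₂`. -/
def pt {m s : ℕ} (C : Fin s → Matrix (Fin m) (Fin m) (ZMod 2)) (i : ℕ) (j : Fin s) : ℝ :=
  ∑ ℓ : Fin m, (((C j).mulVec (bvec m i) ℓ).val : ℝ) / 2 ^ (ℓ.1 + 1)

/-- The factor `N`: with `M(x,x') = max{k ∈ ℕ₀ : ⌊2^k x⌋ = ⌊2^k x'⌋}` (the number of matching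
leading binary digits), `Nf x x' c` equals `1` if `M(x,x') > c` (equivalently the first `c+1`
binary digits match), `-1` if `M(x,x') = c` (the first `c` digits match but not `c+1`), and
`0` if `M(x,x') < c`. -/
def Nf (x x' : ℝ) (c : ℕ) : ℤ :=
  if ⌊(2:ℝ) ^ (c + 1) * x⌋ = ⌊(2:ℝ) ^ (c + 1) * x'⌋ then 1
  else if ⌊(2:ℝ) ^ c * x⌋ = ⌊(2:ℝ) ^ c * x'⌋ then -1
  else 0

/-- The gain coefficient `Γ_{u,k} = 2^{-m} Σ_{i=0}^{2^m-1} Σ_{i'=0}^{2^m-1} ∏_{j∈u} N_{i,i',j}`. -/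
def Gam {m s : ℕ} (C : Fin s → Matrix (Fin m) (Fin m) (ZMod 2))
    (u : Finset (Fin s)) (k : Fin s → ℕ) : ℚ :=
  (2 ^ m : ℚ)⁻¹ * ∑ i ∈ Finset.range (2 ^ m), ∑ i' ∈ Finset.range (2 ^ m),
      ∏ j ∈ u, (Nf (pt C i j) (pt C i' j) (k j) : ℚ)

/- ### Auxiliary lemmas -/

lemma zmod2_add_eq_zero : ∀ a b : ZMod 2, a + b = 0 ↔ a = b := by decide

lemma zmod2_val_eq_iff (a b : ZMod 2) : a.val = b.val ↔ a = b :=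
  ⟨fun h => ZMod.val_injective 2 h, fun h => h ▸ rfl⟩

lemma bits_lt (a : ℕ → ℕ) (ha : ∀ t, a t ≤ 1) (m : ℕ) :
    (∑ t ∈ Finset.range m, a t * 2 ^ t) < 2 ^ m := by
  induction m with
  | zero => simp
  | succ m ih =>
    rw [Finset.sum_range_succ]
    have h1 : a m * 2 ^ m ≤ 2 ^ m := by
      calc a m * 2 ^ m ≤ 1 * 2 ^ m := Nat.mul_le_mul_right _ (ha m)
      _ = 2 ^ m := one_mul _
    have : (2:ℕ) ^ (m+1) = 2 ^ m + 2 ^ m := by ring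
    omega

lemma bits_div_mod (a : ℕ → ℕ) (ha : ∀ t, a t ≤ 1) (m : ℕ) :
    ∀ p < m, ((∑ t ∈ Finset.range m, a t * 2 ^ t) / 2 ^ p) % 2 = a p := by
  induction m with
  | zero => intro p hp; omega
  | succ m ih =>
    intro p hp
    rw [Finset.sum_range_succ]
    rcases Nat.lt_or_ge p m with h | h
    · have hpm : (2:ℕ) ^ m = 2 ^ p * (2 * 2 ^ (m - p - 1)) := by
        rw [← pow_succ']
        rw [← pow_add]
        congr 1
        omega
      rw [show a m * 2 ^ m = 2 ^ p * (a m * (2 * 2 ^ (m - p - 1))) by rw [hpm]; ring]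
      rw [Nat.add_mul_div_left _ _ (by positivity : 0 < 2 ^ p)]
      rw [show a m * (2 * 2 ^ (m - p - 1)) = 2 * (a m * 2 ^ (m - p - 1)) by ring]
      have := ih p h
      omega
    · have hpm : p = m := by omega
      subst hpm
      rw [show a p * 2 ^ p = 2 ^ p * a p by ring]
      rw [Nat.add_mul_div_left _ _ (by positivity : 0 < 2 ^ p)]
      rw [Nat.div_eq_of_lt (bits_lt a ha p)]
      have := ha p
      omega

/-- The digit of `y` at position `t` counted from the least significant end. -/
def av (m : ℕ) (y : Fin m → ZMod 2) (t : ℕ) : ℕ :=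
  if h : m - 1 - t < m then (y ⟨m - 1 - t, h⟩).val else 0

/-- The integer `n` with `x = n/2^m`. -/
def nv (m : ℕ) (y : Fin m → ZMod 2) : ℕ := ∑ t ∈ Finset.range m, av m y t * 2 ^ t

lemma av_le (m : ℕ) (y : Fin m → ZMod 2) (t : ℕ) : av m y t ≤ 1 := by
  unfold av
  split
  · exact Nat.lt_succ_iff.mp (ZMod.val_lt _)
  · omega

lemma nv_lt (m : ℕ) (y : Fin m → ZMod 2) : nv m y < 2 ^ m :=
  bits_lt _ (av_le m y) m

lemma nv_digit (m : ℕ) (y : Fin m → ZMod 2) (c : ℕ) (hc : c < m) :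
    (nv m y / 2 ^ (m - 1 - c)) % 2 = (y ⟨c, hc⟩).val := by
  rw [nv, bits_div_mod _ (av_le m y) m (m - 1 - c) (by omega), av, dif_pos (by omega : m - 1 - (m - 1 - c) < m)]
  exact congrArg (fun z => ZMod.val (y z)) (Fin.ext (show m - 1 - (m - 1 - c) = c by omega))

lemma pt_eq {m s : ℕ} (hm : 1 ≤ m) (C : Fin s → Matrix (Fin m) (Fin m) (ZMod 2))
    (i : ℕ) (j : Fin s) :
    pt C i j = (nv m ((C j).mulVec (bvec m i)) : ℝ) / 2 ^ m := by
  set y := (C j).mulVec (bvec m i) with hy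
  set g : ℕ → ℝ := fun t => if h : t < m then ((y ⟨t, h⟩).val : ℝ) / 2 ^ (t + 1) else 0 with hg
  have step1 : pt C i j = ∑ t ∈ Finset.range m, g t := by
    rw [pt, ← Fin.sum_univ_eq_sum_range]
    apply Finset.sum_congr rfl
    intro ℓ _
    simp only [hg, dif_pos ℓ.2, Fin.eta, hy]
  rw [step1, ← Finset.sum_range_reflect g m, nv, Nat.cast_sum, Finset.sum_div]
  apply Finset.sum_congr rfl
  intro t ht
  have htm : t < m := Finset.mem_range.mp ht
  have h1 : m - 1 - t < m := by omega
  simp only [hg, dif_pos h1, av, dif_pos h1]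
  push_cast
  rw [show m - 1 - t + 1 = m - t by omega,
    show (2:ℝ) ^ m = 2 ^ t * 2 ^ (m - t) by rw [← pow_add]; congr 1; omega]
  field_simp

lemma floor_pt {m s : ℕ} (hm : 1 ≤ m) (C : Fin s → Matrix (Fin m) (Fin m) (ZMod 2))
    (i : ℕ) (j : Fin s) (c : ℕ) (hc : c ≤ m) :
    ⌊(2:ℝ) ^ c * pt C i j⌋ = ((nv m ((C j).mulVec (bvec m i)) / 2 ^ (m - c) : ℕ) : ℤ) := by
  rw [pt_eq hm C i j]
  set n := nv m ((C j).mulVec (bvec m i)) with hn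
  have h1 : (2:ℝ) ^ c * ((n : ℝ) / 2 ^ m) = (n : ℝ) / 2 ^ (m - c) := by
    rw [show (2:ℝ) ^ m = 2 ^ c * 2 ^ (m - c) by rw [← pow_add]; congr 1; omega]
    field_simp
  rw [h1]
  have h2 : ((2:ℝ) ^ (m - c)) = ((2 ^ (m - c) : ℕ) : ℝ) := by push_cast; ring
  rw [h2, ← Int.natCast_floor_eq_floor (by positivity), Nat.floor_div_eq_div]

lemma div_eq_iff_digits {m : ℕ} (hm : 1 ≤ m) (y y' : Fin m → ZMod 2) :
    ∀ c, c ≤ m → (nv m y / 2 ^ (m - c) = nv m y' / 2 ^ (m - c) ↔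
      ∀ r : Fin m, r.1 < c → y r = y' r) := by
  intro c
  induction c with
  | zero =>
    intro _
    rw [Nat.sub_zero, Nat.div_eq_of_lt (nv_lt m y), Nat.div_eq_of_lt (nv_lt m y')]
    simp
  | succ c ih =>
    intro hc1
    have hc : c ≤ m := by omega
    have key : ∀ z : Fin m → ZMod 2,
        nv m z / 2 ^ (m - c) = (nv m z / 2 ^ (m - (c + 1))) / 2 := by
      intro z
      rw [Nat.div_div_eq_div_mul, ← pow_succ]
      congr 2
      omega
    have hmod : ∀ z : Fin m → ZMod 2,
        (nv m z / 2 ^ (m - (c + 1))) % 2 = (z ⟨c, by omega⟩).val := by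
      intro z
      rw [show m - (c + 1) = m - 1 - c by omega]
      exact nv_digit m z c (by omega)
    constructor
    · intro h
      have h2 : nv m y / 2 ^ (m - c) = nv m y' / 2 ^ (m - c) := by rw [key, key, h]
      intro r hr
      rcases Nat.lt_or_ge r.1 c with h3 | h3
      · exact (ih hc).mp h2 r h3
      · have hr' : r = ⟨c, by omega⟩ := Fin.ext (show r.1 = c by omega)
        rw [hr']
        apply (zmod2_val_eq_iff _ _).mp
        rw [← hmod y, ← hmod y', h]
    · intro h
      have h2 := (ih hc).mpr (fun r hr => h r (by omega))
      rw [key y, key y'] at h2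
      have h3 : (y ⟨c, by omega⟩).val = (y' ⟨c, by omega⟩).val := by
        rw [zmod2_val_eq_iff]
        exact h ⟨c, by omega⟩ (Nat.lt_succ_self c)
      have h4 := hmod y
      have h5 := hmod y'
      omega

theorem statement (m s : ℕ) (hm : 1 ≤ m) (hs : 1 ≤ s)
    (C : Fin s → Matrix (Fin m) (Fin m) (ZMod 2))
    (u : Finset (Fin s)) (hu : u.Nonempty)
    (k : Fin s → ℕ) (hk : ∀ j ∈ u, k j ≤ m - 1)
    (i i' : ℕ) (hi : i < 2 ^ m) (hi' : i' < 2 ^ m) :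
    ((stack C u k).mulVec (bvec m i + bvec m i') ≠ 0 →
      ∏ j ∈ u, Nf (pt C i j) (pt C i' j) (k j) = 0) ∧
    ((stack C u k).mulVec (bvec m i + bvec m i') = 0 →
      ∏ j ∈ u, Nf (pt C i j) (pt C i' j) (k j) =
        (-1 : ℤ) ^ (Finset.univ.filter (fun j : {x // x ∈ u} =>
          (grad C u k).mulVec (bvec m i + bvec m i') j ≠ 0)).card) := by
  set v := bvec m i + bvec m i' with hv
  -- additivity of mulVec
  have hDadd : ∀ (j : Fin s) (r : Fin m),
      (C j).mulVec v r = (C j).mulVec (bvec m i) r + (C j).mulVec (bvec m i') r := by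
    intro j r
    rw [hv, Matrix.mulVec_add]
    rfl
  -- floor characterization
  have floorchar : ∀ (j : Fin s) (c : ℕ), c ≤ m →
      ((⌊(2:ℝ) ^ c * pt C i j⌋ = ⌊(2:ℝ) ^ c * pt C i' j⌋) ↔
        ∀ r : Fin m, r.1 < c → (C j).mulVec v r = 0) := by
    intro j c hc
    rw [floor_pt hm C i j c hc, floor_pt hm C i' j c hc, Nat.cast_inj,
      div_eq_iff_digits hm _ _ c hc]
    apply forall_congr'
    intro r
    apply imp_congr Iff.rfl
    rw [hDadd j r, zmod2_add_eq_zero]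
  -- stack application
  have happ : ∀ (j : Fin s) (hj : j ∈ u) (r : ℕ) (hr : r < k j) (hrm : r < m),
      (stack C u k).mulVec v ⟨⟨j, hj⟩, ⟨r, hr⟩⟩ = (C j).mulVec v ⟨r, hrm⟩ := by
    intro j hj r hr hrm
    simp only [Matrix.mulVec, dotProduct, stack, rowAt, dif_pos hrm]
  -- grad application
  have hgrad : ∀ (j : Fin s) (hj : j ∈ u) (hjm : k j < m),
      (grad C u k).mulVec v ⟨j, hj⟩ = (C j).mulVec v ⟨k j, hjm⟩ := by
    intro j hj hjm
    simp only [Matrix.mulVec, dotProduct, grad, rowAt, dif_pos hjm]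
  -- stack characterization
  have hstk : (stack C u k).mulVec v = 0 ↔
      ∀ j ∈ u, ∀ r : Fin m, r.1 < k j → (C j).mulVec v r = 0 := by
    constructor
    · intro h j hj r hr
      have hrm : r.1 < m := r.2
      have := congrFun h ⟨⟨j, hj⟩, ⟨r.1, hr⟩⟩
      rw [happ j hj r.1 hr hrm] at this
      simpa using this
    · intro h
      funext p
      obtain ⟨⟨j, hj⟩, ⟨r, hr⟩⟩ := p
      have hrj : r < k j := hr
      have hrm : r < m := by have := hk j hj; omega
      rw [happ j hj r hr hrm]
      simpa using h j hj ⟨r, hrm⟩ hrj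
  constructor
  · -- stack nonzero case
    intro hne
    rw [Ne, hstk] at hne
    push_neg at hne
    obtain ⟨j, hj, r, hr, hD⟩ := hne
    apply Finset.prod_eq_zero hj
    rw [Nf, if_neg, if_neg]
    · intro h
      exact hD ((floorchar j (k j) (by have := hk j hj; omega)).mp h r hr)
    · intro h
      exact hD ((floorchar j (k j + 1) (by have := hk j hj; omega)).mp h r (Nat.lt_succ_of_lt hr))
  · -- stack zero case
    intro hz
    rw [hstk] at hz
    rw [← Finset.prod_attach u (fun j => Nf (pt C i j) (pt C i' j) (k j))]
    have step : ∀ x ∈ u.attach,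
        Nf (pt C i x.1) (pt C i' x.1) (k x.1) =
          (if (grad C u k).mulVec v x ≠ 0 then (-1 : ℤ) else 1) := by
      intro x _
      obtain ⟨j, hj⟩ := x
      have hcm : k j < m := by have := hk j hj; omega
      rw [hgrad j hj hcm]
      have hfc : ⌊(2:ℝ) ^ (k j) * pt C i j⌋ = ⌊(2:ℝ) ^ (k j) * pt C i' j⌋ :=
        (floorchar j (k j) hcm.le).mpr (fun r hr => hz j hj r hr)
      have hfc1 : (⌊(2:ℝ) ^ (k j + 1) * pt C i j⌋ = ⌊(2:ℝ) ^ (k j + 1) * pt C i' j⌋) ↔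
          (C j).mulVec v ⟨k j, hcm⟩ = 0 := by
        rw [floorchar j (k j + 1) (by omega)]
        constructor
        · intro h
          exact h ⟨k j, hcm⟩ (Nat.lt_succ_self _)
        · intro h0 r hr
          rcases Nat.lt_or_ge r.1 (k j) with h3 | h3
          · exact hz j hj r h3
          · have : r = ⟨k j, hcm⟩ := Fin.ext (show r.1 = k j by omega)
            rw [this]
            exact h0
      by_cases hD : (C j).mulVec v ⟨k j, hcm⟩ = 0
      · rw [Nf, if_pos (hfc1.mpr hD), if_neg (by simpa using hD)]
      · rw [Nf, if_neg (fun h => hD (hfc1.mp h)), if_pos hfc, if_pos]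
        simpa using hD
    rw [Finset.prod_congr rfl step, Finset.univ_eq_attach, Finset.prod_ite,
      Finset.prod_const, Finset.prod_const_one, mul_one]

end
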